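/- For every n ≥ 4, any two disjoint edges e₁, e₂ of Q_n, and any two vertices u, v of Q_n with opposite parities and uv ∉ {e₁, e₂}, there exists a Hamiltonian path in Q_n joining u and v that contains both e₁ and e₂. -/

import Mathlib

open SimpleGraph Finset

def cube (n : ℕ) : SimpleGraph (Fin n → ZMod 2) where
  Adj x y := hammingDist x y = 1
  symm := ⟨by intro x y h; rwa [hammingDist_comm]⟩
  loopless := ⟨by intro x h; simp [hammingDist_self] at h⟩

def parity {n : ℕ} (u : Fin n → ZMod 2) : ZMod 2 := ∑ i, u i

namespace CubeAux

abbrev V (n : ℕ) := Fin n → ZMod 2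

lemma z2 (x : ZMod 2) : x = 0 ∨ x = 1 := by revert x; decide

lemma z2_ne {a b : ZMod 2} : a ≠ b ↔ b = a + 1 := by revert a b; decide

lemma hd_card {n : ℕ} (x y : V n) :
    hammingDist x y = (univ.filter fun i => x i ≠ y i).card := rfl

/-- basis vector -/
def δ {n : ℕ} (i : Fin n) : V n := Pi.single i 1

lemma cube_adj {n : ℕ} {x y : V n} : (cube n).Adj x y ↔ ∃ i, y = x + δ i := by
  constructor
  · intro h
    have h1 : (univ.filter fun i => x i ≠ y i).card = 1 := h
    obtain ⟨i, hi⟩ := Finset.card_eq_one.1 h1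
    refine ⟨i, funext fun j => ?_⟩
    by_cases hj : j = i
    · subst hj
      have : x j ≠ y j := by
        have : j ∈ univ.filter fun i => x i ≠ y i := by rw [hi]; simp
        simpa using this
      rw [z2_ne] at this
      simp [this, δ, Pi.single_apply]
    · have : j ∉ univ.filter fun i => x i ≠ y i := by rw [hi]; simp [hj]
      simp only [mem_filter, mem_univ, true_and, not_not] at this
      simp [δ, Pi.single_apply, hj, ← this]
  · rintro ⟨i, rfl⟩
    show hammingDist _ _ = 1
    rw [hd_card]
    have : (univ.filter fun j => x j ≠ (x + δ i) j) = {i} := by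
      ext j
      by_cases hj : j = i <;>
        simp [hj, δ, Pi.single_apply, z2_ne]
    rw [this, Finset.card_singleton]

lemma cube_adj_add {n : ℕ} (x : V n) (i : Fin n) : (cube n).Adj x (x + δ i) :=
  cube_adj.2 ⟨i, rfl⟩





variable {n : ℕ}

/-- insert coordinate `b` at position `d` -/
def ins (d : Fin (n+1)) (b : ZMod 2) (x : V n) : V (n+1) := d.insertNth b x

@[simp] lemma ins_apply_same (d : Fin (n+1)) (b : ZMod 2) (x : V n) : ins d b x d = b :=
  Fin.insertNth_apply_same (α := fun _ => ZMod 2) d b x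

@[simp] lemma removeNth_ins (d : Fin (n+1)) (b : ZMod 2) (x : V n) :
    d.removeNth (ins d b x) = x := Fin.removeNth_insertNth (α := fun _ => ZMod 2) d b x

lemma ins_removeNth (d : Fin (n+1)) (z : V (n+1)) : ins d (z d) (d.removeNth z) = z :=
  Fin.insertNth_self_removeNth (α := fun _ => ZMod 2) d z

lemma ins_inj (d : Fin (n+1)) (b : ZMod 2) : Function.Injective (ins d b) := by
  intro x y h
  have := congrArg d.removeNth h
  simpa using this

lemma hd_ins (d : Fin (n+1)) (b b' : ZMod 2) (x y : V n) :
    hammingDist (ins d b x) (ins d b' y) = (if b = b' then 0 else 1) + hammingDist x y := by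
  rw [hd_card, hd_card, Finset.card_filter, Finset.card_filter,
    Fin.sum_univ_succAbove _ d]
  simp only [ins, Fin.insertNth_apply_same, Fin.insertNth_apply_succAbove]
  congr 1
  by_cases h : b = b' <;> simp [h]

lemma parity_ins (d : Fin (n+1)) (b : ZMod 2) (x : V n) :
    parity (ins d b x) = b + parity x := by
  unfold parity
  rw [Fin.sum_univ_succAbove _ d]
  simp [ins, Fin.insertNth_apply_same, Fin.insertNth_apply_succAbove]

lemma adj_ins_iff (d : Fin (n+1)) (b : ZMod 2) {x y : V n} :
    (cube (n+1)).Adj (ins d b x) (ins d b y) ↔ (cube n).Adj x y := by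
  show hammingDist _ _ = 1 ↔ hammingDist _ _ = 1
  rw [hd_ins]; simp

lemma adj_cross (d : Fin (n+1)) {b b' : ZMod 2} (hb : b ≠ b') (x : V n) :
    (cube (n+1)).Adj (ins d b x) (ins d b' x) := by
  show hammingDist _ _ = 1
  rw [hd_ins]; simp [hb]

/-- the embedding of `cube n` into side `b` of `cube (n+1)` as a graph hom -/
@[reducible]
def ιhom (d : Fin (n+1)) (b : ZMod 2) : cube n →g cube (n+1) where
  toFun := ins d b
  map_rel' := fun h => (adj_ins_iff d b).2 h

@[simp] lemma ιhom_apply (d : Fin (n+1)) (b : ZMod 2) (x : V n) : ιhom d b x = ins d b x := rfl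





lemma parity_add {n : ℕ} (x y : V n) : parity (x + y) = parity x + parity y := by
  unfold parity; rw [← Finset.sum_add_distrib]; rfl

lemma parity_δ {n : ℕ} (i : Fin n) : parity (δ i) = 1 := by
  unfold parity δ
  rw [Finset.sum_pi_single']
  simp

lemma card_V (n : ℕ) : Fintype.card (V n) = 2 ^ n := by
  rw [Fintype.card_fun, ZMod.card, Fintype.card_fin]

lemma card_parity_ne {n : ℕ} (hn : 1 ≤ n) (c : ZMod 2) :
    (univ.filter fun x : V n => parity x ≠ c).card = 2 ^ (n - 1) := by
  obtain ⟨m, rfl⟩ : ∃ m, n = m + 1 := ⟨n - 1, by omega⟩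
  have key : (univ.filter fun x : V (m+1) => parity x = c).card
      = (univ.filter fun x : V (m+1) => parity x ≠ c).card := by
    apply Finset.card_bij' (fun x _ => x + δ 0) (fun x _ => x + δ 0)
    · intro x _; rw [add_assoc]; simp [CharTwo.add_self_eq_zero]
    · intro x _; rw [add_assoc]; simp [CharTwo.add_self_eq_zero]
    · intro x hx
      simp only [mem_filter, mem_univ, true_and] at hx ⊢
      rw [parity_add, parity_δ]
      revert hx; generalize parity x = p; revert c p; decide
    · intro x hx
      simp only [mem_filter, mem_univ, true_and] at hx ⊢
      rw [parity_add, parity_δ]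
      revert hx; generalize parity x = p; revert c p; decide
  have total := Finset.card_filter_add_card_filter_not
    (s := (univ : Finset (V (m+1)))) (p := fun x => parity x = c)
  rw [Finset.card_univ, card_V] at total
  have h2 : 2 ^ (m + 1) = 2 * 2 ^ m := by ring
  simp only [Nat.add_sub_cancel]
  simp only [ne_eq] at key ⊢
  omega

lemma sym2_unique {α : Type*} {a x y : α} (h : s(a, x) = s(a, y)) : x = y := by
  rw [Sym2.eq_iff] at h
  rcases h with ⟨-, h⟩ | ⟨h1, h2⟩
  · exact h
  · rw [h2, h1]

lemma exists_pick1 {n : ℕ} (hn : 2 ≤ n) (c : ZMod 2) (a : V n) (e : Sym2 (V n)) :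
    ∃ x : V n, parity x ≠ c ∧ s(a, x) ≠ e := by
  classical
  set bad : Finset (V n) := univ.filter fun x => s(a, x) = e with hbad
  have hb1 : bad.card ≤ 1 := by
    rw [Finset.card_le_one]
    intro x hx y hy
    simp only [hbad, mem_filter, mem_univ, true_and] at hx hy
    exact sym2_unique (hx.trans hy.symm)
  have hg : (univ.filter fun x : V n => parity x ≠ c).card = 2 ^ (n-1) :=
    card_parity_ne (by omega) c
  have hlt : bad.card < (univ.filter fun x : V n => parity x ≠ c).card := by
    rw [hg]
    have : 2 ≤ 2 ^ (n-1) := by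
      calc 2 = 2^1 := rfl
      _ ≤ 2^(n-1) := Nat.pow_le_pow_right (by omega) (by omega)
    omega
  by_contra hcon
  push_neg at hcon
  have hsub : (univ.filter fun x : V n => parity x ≠ c) ⊆ bad := by
    intro x hx
    simp only [mem_filter, mem_univ, true_and] at hx ⊢
    simp only [hbad, mem_filter, mem_univ, true_and]
    exact hcon x hx
  exact absurd (Finset.card_le_card hsub) (by omega)

lemma exists_pick2 {n : ℕ} (hn : 3 ≤ n) (c : ZMod 2) (a b : V n) (e₁ e₂ : Sym2 (V n)) :
    ∃ x : V n, parity x ≠ c ∧ s(a, x) ≠ e₁ ∧ s(x, b) ≠ e₂ := by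
  classical
  set bad : Finset (V n) := univ.filter fun x => s(a, x) = e₁ ∨ s(x, b) = e₂ with hbad
  have hb1 : bad.card ≤ 2 := by
    have hsub : bad ⊆ (univ.filter fun x => s(a, x) = e₁) ∪
        (univ.filter fun x => s(x, b) = e₂) := by
      intro x hx
      simp only [hbad, mem_filter, mem_univ, true_and] at hx
      simp only [Finset.mem_union, mem_filter, mem_univ, true_and]
      exact hx
    refine (Finset.card_le_card hsub).trans ((Finset.card_union_le _ _).trans ?_)
    have h1 : (univ.filter fun x : V n => s(a, x) = e₁).card ≤ 1 := by
      rw [Finset.card_le_one]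
      intro x hx y hy
      simp only [mem_filter, mem_univ, true_and] at hx hy
      exact sym2_unique (hx.trans hy.symm)
    have h2 : (univ.filter fun x : V n => s(x, b) = e₂).card ≤ 1 := by
      rw [Finset.card_le_one]
      intro x hx y hy
      simp only [mem_filter, mem_univ, true_and] at hx hy
      have hx' : s(b, x) = e₂ := (Sym2.eq_swap).trans hx
      have hy' : s(b, y) = e₂ := (Sym2.eq_swap).trans hy
      exact sym2_unique (hx'.trans hy'.symm)
    omega
  have hg : (univ.filter fun x : V n => parity x ≠ c).card = 2 ^ (n-1) :=
    card_parity_ne (by omega) c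
  have hlt : bad.card < (univ.filter fun x : V n => parity x ≠ c).card := by
    rw [hg]
    have : 4 ≤ 2 ^ (n-1) := by
      calc 4 = 2^2 := rfl
      _ ≤ 2^(n-1) := Nat.pow_le_pow_right (by omega) (by omega)
    omega
  by_contra hcon
  push_neg at hcon
  have hsub : (univ.filter fun x : V n => parity x ≠ c) ⊆ bad := by
    intro x hx
    simp only [mem_filter, mem_univ, true_and] at hx
    simp only [hbad, mem_filter, mem_univ, true_and]
    by_contra hx2
    push_neg at hx2
    exact hx2.2 (hcon x hx hx2.1)
  exact absurd (Finset.card_le_card hsub) (by omega)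

lemma exists_edge_ne {β : Type*} [DecidableEq β] {l : List β} (hn : l.Nodup)
    (hl : 3 ≤ l.length) (f₁ f₂ : β) : ∃ f ∈ l, f ≠ f₁ ∧ f ≠ f₂ := by
  have hcard : l.toFinset.card = l.length := List.toFinset_card_of_nodup hn
  have h2 : ({f₁, f₂} : Finset β).card ≤ 2 :=
    (Finset.card_insert_le _ _).trans (by simp)
  by_contra hcon
  push_neg at hcon
  have hsub : l.toFinset ⊆ {f₁, f₂} := by
    intro f hf
    rw [List.mem_toFinset] at hf
    rcases eq_or_ne f f₁ with h | h
    · simp [h]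
    · simp [hcon f hf h]
  have := Finset.card_le_card hsub
  omega

end CubeAux
namespace CubeAux
open SimpleGraph.Walk

variable {n : ℕ}

lemma count_map_ins (d : Fin (n+1)) (b : ZMod 2) {a c : V n} (w : (cube n).Walk a c)
    (x : V n) : ((w.map (ιhom d b)).support.count (ins d b x)) = w.support.count x := by
  rw [SimpleGraph.Walk.support_map]
  exact List.count_map_of_injective _ _ (ins_inj d b) x

lemma count_map_ins_ne (d : Fin (n+1)) (b : ZMod 2) {a c : V n} (w : (cube n).Walk a c)
    (z : V (n+1)) (hz : z d ≠ b) : (w.map (ιhom d b)).support.count z = 0 := by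
  rw [SimpleGraph.Walk.support_map, List.count_eq_zero]
  intro hmem
  obtain ⟨y, -, rfl⟩ := List.mem_map.1 hmem
  exact hz (ins_apply_same d b y)

lemma zmod2_ne_of_ne {a b c : ZMod 2} (hbc : b ≠ c) (hab : a ≠ b) : a = c := by
  revert a b c; decide

lemma exists_decomp {α : Type*} {G : SimpleGraph α} {a c : α} (w : G.Walk a c) {f : Sym2 α}
    (hf : f ∈ w.edges) :
    ∃ (x₀ x₁ : α) (h : G.Adj x₀ x₁) (q : G.Walk a x₀) (r : G.Walk x₁ c),
      w = q.append (cons h r) ∧ f = s(x₀, x₁) := by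
  revert hf
  induction w with
  | nil => intro hf; simp at hf
  | @cons u y c h' w' ih =>
    intro hf
    rw [SimpleGraph.Walk.edges_cons, List.mem_cons] at hf
    rcases hf with hf | hf
    · exact ⟨u, y, h', SimpleGraph.Walk.nil, w', rfl, hf⟩
    · obtain ⟨x₀, x₁, hh, q, r, hw, hfeq⟩ := ih hf
      subst hw
      exact ⟨x₀, x₁, hh, cons h' q, r, by rw [SimpleGraph.Walk.cons_append], hfeq⟩

lemma glue_cross {d : Fin (n+1)} {b b' : ZMod 2} (hb : b ≠ b') {u' x v' : V n}
    (p : (cube n).Walk u' x) (q : (cube n).Walk x v')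
    (hp : p.IsHamiltonian) (hq : q.IsHamiltonian) :
    ∃ W : (cube (n+1)).Walk (ins d b u') (ins d b' v'), W.IsHamiltonian ∧
      (∀ f ∈ p.edges, Sym2.map (ins d b) f ∈ W.edges) ∧
      (∀ f ∈ q.edges, Sym2.map (ins d b') f ∈ W.edges) := by
  refine ⟨(p.map (ιhom d b)).append (cons (adj_cross d hb x) (q.map (ιhom d b'))), ?_, ?_, ?_⟩
  · intro z
    rw [SimpleGraph.Walk.support_append, List.count_append]
    have hsupp : (cons (adj_cross d hb x) (q.map (ιhom d b'))).support.tail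
        = (q.map (ιhom d b')).support := by
      rw [SimpleGraph.Walk.support_cons]; rfl
    rw [hsupp]
    rcases eq_or_ne (z d) b with hz | hz
    · rw [count_map_ins_ne d b' q z (by rw [hz]; exact hb)]
      have hz2 : z = ins d b (d.removeNth z) := by rw [← hz]; exact (ins_removeNth d z).symm
      rw [hz2, count_map_ins, hp _]
    · have hz' : z d = b' := zmod2_ne_of_ne hb hz
      rw [count_map_ins_ne d b p z hz]
      have hz2 : z = ins d b' (d.removeNth z) := by rw [← hz']; exact (ins_removeNth d z).symm
      rw [hz2, count_map_ins, hq _]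
  · intro f hf
    rw [SimpleGraph.Walk.edges_append, List.mem_append]
    left
    rw [SimpleGraph.Walk.edges_map]
    exact List.mem_map_of_mem hf
  · intro f hf
    rw [SimpleGraph.Walk.edges_append, List.mem_append]
    right
    rw [SimpleGraph.Walk.edges_cons, List.mem_cons]
    right
    rw [SimpleGraph.Walk.edges_map]
    exact List.mem_map_of_mem hf

lemma glue_detour {d : Fin (n+1)} {b b' : ZMod 2} (hb : b ≠ b') {u' x₀ x₁ v' : V n}
    (h : (cube n).Adj x₀ x₁)
    (q : (cube n).Walk u' x₀) (r : (cube n).Walk x₁ v') (t : (cube n).Walk x₀ x₁)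
    (hp : (q.append (cons h r)).IsHamiltonian) (ht : t.IsHamiltonian) :
    ∃ W : (cube (n+1)).Walk (ins d b u') (ins d b v'), W.IsHamiltonian ∧
      (∀ f ∈ q.edges, Sym2.map (ins d b) f ∈ W.edges) ∧
      (∀ f ∈ r.edges, Sym2.map (ins d b) f ∈ W.edges) ∧
      (∀ f ∈ t.edges, Sym2.map (ins d b') f ∈ W.edges) := by
  refine ⟨(q.map (ιhom d b)).append (cons (adj_cross d hb x₀)
    ((t.map (ιhom d b')).append (cons (adj_cross d (Ne.symm hb) x₁) (r.map (ιhom d b))))),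
    ?_, ?_, ?_, ?_⟩
  · intro z
    rw [SimpleGraph.Walk.support_append, List.count_append]
    have hsupp : (cons (adj_cross d hb x₀)
        ((t.map (ιhom d b')).append (cons (adj_cross d (Ne.symm hb) x₁)
          (r.map (ιhom d b))))).support.tail
        = (t.map (ιhom d b')).support ++ (r.map (ιhom d b)).support := by
      rw [SimpleGraph.Walk.support_cons]
      show ((t.map (ιhom d b')).append _).support = _
      rw [SimpleGraph.Walk.support_append, SimpleGraph.Walk.support_cons]
      rfl
    rw [hsupp, List.count_append]
    have hcount := hp (d.removeNth z)
    rw [SimpleGraph.Walk.support_append] at hcount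
    have hsupp2 : (cons h r).support.tail = r.support := by
      rw [SimpleGraph.Walk.support_cons]
      rfl
    rw [hsupp2, List.count_append] at hcount
    rcases eq_or_ne (z d) b with hz | hz
    · rw [count_map_ins_ne d b' t z (by rw [hz]; exact hb)]
      have hz2 : z = ins d b (d.removeNth z) := by rw [← hz]; exact (ins_removeNth d z).symm
      rw [hz2, count_map_ins, count_map_ins]
      omega
    · have hz' : z d = b' := zmod2_ne_of_ne hb hz
      rw [count_map_ins_ne d b q z hz, count_map_ins_ne d b r z hz]
      have hz2 : z = ins d b' (d.removeNth z) := by rw [← hz']; exact (ins_removeNth d z).symm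
      rw [hz2, count_map_ins, ht _]
  · intro f hf
    rw [SimpleGraph.Walk.edges_append, List.mem_append]
    left
    rw [SimpleGraph.Walk.edges_map]
    exact List.mem_map_of_mem hf
  · intro f hf
    simp only [SimpleGraph.Walk.edges_append, SimpleGraph.Walk.edges_cons, List.mem_append,
      List.mem_cons, SimpleGraph.Walk.edges_map]
    right; right; right; right
    exact List.mem_map_of_mem hf
  · intro f hf
    simp only [SimpleGraph.Walk.edges_append, SimpleGraph.Walk.edges_cons, List.mem_append,
      List.mem_cons, SimpleGraph.Walk.edges_map]
    right; right; left
    exact List.mem_map_of_mem hf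

lemma edge_rep {d : Fin (n+1)} {b : ZMod 2} {e : Sym2 (V (n+1))}
    (he : e ∈ (cube (n+1)).edgeSet) (hside : ∀ z ∈ e, z d = b) :
    ∃ e' : Sym2 (V n), e' ∈ (cube n).edgeSet ∧ e = Sym2.map (ins d b) e' := by
  induction e with
  | _ a c =>
    rw [SimpleGraph.mem_edgeSet] at he
    have ha : a d = b := hside a (Sym2.mem_mk_left a c)
    have hc : c d = b := hside c (Sym2.mem_mk_right a c)
    have ha2 : ins d b (d.removeNth a) = a := by rw [← ha]; exact ins_removeNth d a
    have hc2 : ins d b (d.removeNth c) = c := by rw [← hc]; exact ins_removeNth d c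
    refine ⟨s(d.removeNth a, d.removeNth c), ?_, ?_⟩
    · rw [SimpleGraph.mem_edgeSet]
      have hadj : (cube (n+1)).Adj (ins d b (d.removeNth a)) (ins d b (d.removeNth c)) := by
        rw [ha2, hc2]; exact he
      exact (adj_ins_iff d b).1 hadj
    · rw [Sym2.map_pair_eq, ha2, hc2]
end CubeAux
namespace CubeAux
open SimpleGraph SimpleGraph.Walk

variable {n : ℕ}

lemma z2_ne_add_one (a : ZMod 2) : a ≠ a + 1 := by revert a; decide

lemma z2_eq_of_ne_ne {a b c : ZMod 2} (h1 : a ≠ c) (h2 : b ≠ c) : a = b := by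
  revert a b c; decide

lemma parity_adj {x y : V n} (h : (cube n).Adj x y) : parity x ≠ parity y := by
  obtain ⟨i, rfl⟩ := cube_adj.1 h
  rw [parity_add, parity_δ]
  exact z2_ne_add_one _

lemma parity_split (d : Fin (n+1)) (z : V (n+1)) :
    parity z = z d + parity (d.removeNth z) := by
  conv_lhs => rw [← ins_removeNth d z]
  rw [parity_ins]

lemma z2_parity_cases {a b p q : ZMod 2} (h : a + p ≠ b + q) :
    (a = b → p ≠ q) ∧ (a ≠ b → p = q) := by
  revert a b p q; decide

lemma fin1_eq_zero (i : Fin (0+1)) : i = 0 := by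
  have := i.isLt
  exact Fin.ext (by omega)

lemma exists_edge_of_ne {α : Type*} {G : SimpleGraph α} {a c : α} (w : G.Walk a c)
    (h : a ≠ c) : ∃ f, f ∈ w.edges := by
  cases w with
  | nil => exact absurd rfl h
  | cons h' w' => exact ⟨_, List.mem_cons_self⟩

/-- Havel: Hamiltonian path between any two vertices of opposite parity. -/
theorem ham0 : ∀ n, 1 ≤ n → ∀ u v : V n, parity u ≠ parity v →
    ∃ w : (cube n).Walk u v, w.IsHamiltonian := by
  intro n
  induction n with
  | zero => omega
  | succ m ih =>
    intro _ u v hp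
    rcases Nat.eq_zero_or_pos m with rfl | hm
    · -- base case n = 1
      have huv : u ≠ v := fun h => hp (h ▸ rfl)
      have hv : v = u + δ 0 := by
        funext i
        have hi : i = 0 := fin1_eq_zero i
        subst hi
        have h0 : u 0 ≠ v 0 := by
          intro h
          apply huv
          funext j
          have : j = 0 := fin1_eq_zero j
          rw [this, h]
        rw [z2_ne] at h0
        simp [h0, δ, Pi.single_apply]
      have hadj : (cube 1).Adj u v := by rw [hv]; exact cube_adj_add u 0
      refine ⟨Walk.cons hadj Walk.nil, ?_⟩
      intro z
      have hz : z = u ∨ z = v := by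
        rcases eq_or_ne (z 0) (u 0) with h | h
        · left; funext j; rw [fin1_eq_zero j, h]
        · right; funext j
          rw [fin1_eq_zero j, hv]
          rw [z2_ne] at h
          simp [h, δ, Pi.single_apply, add_assoc, CharTwo.add_self_eq_zero]
      have : (Walk.cons hadj (Walk.nil : (cube 1).Walk v v)).support = [u, v] := by
        simp
      rw [this]
      rcases hz with rfl | rfl
      · simp [List.count_cons, huv, Ne.symm huv]
      · simp [List.count_cons, huv, Ne.symm huv]
    · -- step: m ≥ 1
      set d : Fin (m+1) := 0 with hd
      have hu' := (ins_removeNth d u).symm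
      have hv' := (ins_removeNth d v).symm
      have hpu := parity_split d u
      have hpv := parity_split d v
      have hcases := z2_parity_cases (hpu ▸ hpv ▸ hp)
      rcases eq_or_ne (u d) (v d) with hbb | hbb
      · -- same side
        have hpp : parity (d.removeNth u) ≠ parity (d.removeNth v) := hcases.1 hbb
        obtain ⟨p, hpham⟩ := ih hm (d.removeNth u) (d.removeNth v) hpp
        have hne : d.removeNth u ≠ d.removeNth v := fun h => hpp (h ▸ rfl)
        obtain ⟨f, hf⟩ := exists_edge_of_ne p hne
        obtain ⟨x₀, x₁, hadj, q, r, hdecomp, -⟩ := exists_decomp p hf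
        obtain ⟨t, htham⟩ := ih hm x₀ x₁ (parity_adj hadj)
        obtain ⟨W, hWham, -, -, -⟩ := glue_detour (d := d) (b := u d) (b' := u d + 1)
          (z2_ne_add_one _) hadj q r t (hdecomp ▸ hpham) htham
        refine ⟨W.copy (by rw [← hu']) (by rw [hbb, ← hv']), ?_⟩
        intro z
        rw [Walk.support_copy]
        exact hWham z
      · -- different sides
        have hpp : parity (d.removeNth u) = parity (d.removeNth v) := hcases.2 hbb
        set i0 : Fin m := ⟨0, hm⟩ with hi0
        have hx : parity (d.removeNth u + δ i0) ≠ parity (d.removeNth u) := by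
          rw [parity_add, parity_δ]
          exact Ne.symm (z2_ne_add_one _)
        obtain ⟨p, hpham⟩ := ih hm (d.removeNth u) (d.removeNth u + δ i0) (Ne.symm hx)
        obtain ⟨q, hqham⟩ := ih hm (d.removeNth u + δ i0) (d.removeNth v) (by rw [← hpp]; exact hx)
        obtain ⟨W, hWham, -, -⟩ := glue_cross (d := d) hbb p q hpham hqham
        refine ⟨W.copy (by rw [← hu']) (by rw [← hv']), ?_⟩
        intro z
        rw [Walk.support_copy]
        exact hWham z

end CubeAux
namespace CubeAux
open SimpleGraph SimpleGraph.Walk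

variable {n : ℕ}

lemma edge_repr {e : Sym2 (V n)} (he : e ∈ (cube n).edgeSet) :
    ∃ a k, e = s(a, a + δ k) := by
  induction e with
  | _ p q =>
    obtain ⟨k, rfl⟩ := cube_adj.1 ((cube n).mem_edgeSet.1 he)
    exact ⟨p, k, rfl⟩

lemma base2_dir : ∀ u v : V 2, parity u ≠ parity v → v = u + δ 0 ∨ v = u + δ 1 := by decide

lemma base2_count : ∀ (u z : V 2) (i j : Fin 2), j ≠ i →
    List.count z [u, u + δ j, u + δ j + δ i, u + δ j + δ i + δ j] = 1 := by decide

lemma base2_edges : ∀ (u p : V 2) (i j k : Fin 2), j ≠ i →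
    s(p, p + δ k) ≠ s(u, u + δ i) →
    s(p, p + δ k) = s(u, u + δ j) ∨ s(p, p + δ k) = s(u + δ j, u + δ j + δ i) ∨
    s(p, p + δ k) = s(u + δ j + δ i, u + δ j + δ i + δ j) := by decide
end CubeAux
namespace CubeAux
open SimpleGraph SimpleGraph.Walk

theorem ham1 : ∀ n, 2 ≤ n → ∀ e ∈ (cube n).edgeSet, ∀ u v : V n,
    parity u ≠ parity v → s(u, v) ≠ e →
    ∃ w : (cube n).Walk u v, w.IsHamiltonian ∧ e ∈ w.edges := by
  intro n hn
  induction n, hn using Nat.le_induction with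
  | base =>
    intro e he u v hp huv
    obtain ⟨i, j, hij, hv⟩ : ∃ i j : Fin 2, j ≠ i ∧ v = u + δ i := by
      rcases base2_dir u v hp with h | h
      · exact ⟨0, 1, by decide, h⟩
      · exact ⟨1, 0, by decide, h⟩
    have hend : u + δ j + δ i + δ j = v := by
      rw [hv, show u + δ j + δ i + δ j = u + δ i + (δ j + δ j) from by ring,
        CharTwo.add_self_eq_zero, add_zero]
    set W0 : (cube 2).Walk u (u + δ j + δ i + δ j) :=
      Walk.cons (cube_adj_add u j) (Walk.cons (cube_adj_add _ i)
        (Walk.cons (cube_adj_add _ j) Walk.nil)) with hW0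
    refine ⟨W0.copy rfl hend, ?_, ?_⟩
    · intro z
      rw [Walk.support_copy]
      have hsupp : W0.support = [u, u + δ j, u + δ j + δ i, u + δ j + δ i + δ j] := by
        simp [hW0]
      rw [hsupp]
      exact base2_count u z i j hij
    · rw [Walk.edges_copy]
      obtain ⟨p, k, rfl⟩ := edge_repr he
      have huv' : s(p, p + δ k) ≠ s(u, u + δ i) := by rw [← hv]; exact Ne.symm huv
      have hedges : W0.edges = [s(u, u + δ j), s(u + δ j, u + δ j + δ i),
          s(u + δ j + δ i, u + δ j + δ i + δ j)] := by
        simp [hW0]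
      rw [hedges]
      rcases base2_edges u p i j k hij huv' with h | h | h <;> simp [h]
  | succ m hm ih =>
    intro e he u v hp huv
    obtain ⟨a, jd, rfl⟩ := edge_repr he
    set d : Fin (m+1) := ⟨if jd.val = 0 then 1 else 0, by split_ifs <;> omega⟩ with hdd
    have hd_ne : d ≠ jd := by
      intro h
      have := congrArg Fin.val h
      rw [hdd] at this
      simp only at this
      split_ifs at this <;> omega
    have hside : ∀ z ∈ s(a, a + δ jd), z d = a d := by
      intro z hz
      rcases Sym2.mem_iff.1 hz with rfl | rfl
      · rfl
      · show a d + δ jd d = a d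
        simp [δ, Pi.single_eq_of_ne hd_ne]
    obtain ⟨e', he', hE⟩ := edge_rep ((cube (m+1)).mem_edgeSet.2
      (cube_adj.2 ⟨jd, rfl⟩)) hside
    have hu' : ins d (u d) (d.removeNth u) = u := ins_removeNth d u
    have hv' : ins d (v d) (d.removeNth v) = v := ins_removeNth d v
    have hcases := z2_parity_cases ((parity_split d u) ▸ (parity_split d v) ▸ hp)
    have hlen_lemma : ∀ {x y : V m} (p : (cube m).Walk x y), p.IsHamiltonian →
        3 ≤ p.edges.length := by
      intro x y p hpham
      have h1 : p.edges.length = 2 ^ m - 1 := by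
        rw [length_edges, hpham.length_eq, card_V]
      have h4 : 4 ≤ 2 ^ m := by
        calc 4 = 2 ^ 2 := rfl
        _ ≤ 2 ^ m := Nat.pow_le_pow_right (by omega) hm
      omega
    rcases eq_or_ne (u d) (v d) with hbb | hbb
    · -- u, v same side
      have hpp : parity (d.removeNth u) ≠ parity (d.removeNth v) := hcases.1 hbb
      have hvins : ins d (u d) (d.removeNth v) = v := by rw [hbb]; exact hv'
      rcases eq_or_ne (a d) (u d) with hbe | hbe
      · -- e on same side as u, v
        have hins_u : ins d (a d) (d.removeNth u) = u := by rw [hbe]; exact hu'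
        have hins_v : ins d (a d) (d.removeNth v) = v := by rw [hbe, hbb]; exact hv'
        have hne : s(d.removeNth u, d.removeNth v) ≠ e' := by
          intro hc
          apply huv
          rw [hE, ← hc, Sym2.map_pair_eq, hins_u, hins_v]
        obtain ⟨p, hpham, hpe⟩ := ih e' he' (d.removeNth u) (d.removeNth v) hpp hne
        obtain ⟨f, hfmem, hf1, hf2⟩ := exists_edge_ne hpham.isPath.edges_nodup
          (hlen_lemma p hpham) e' e'
        obtain ⟨x₀, x₁, hadj, q, r, hdec, hfeq⟩ := exists_decomp p hfmem
        obtain ⟨t, htham⟩ := ham0 m (by omega) x₀ x₁ (parity_adj hadj)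
        obtain ⟨W, hWham, hWq, hWr, hWt⟩ := glue_detour (d := d) (b := u d)
          (b' := u d + 1) (z2_ne_add_one _) hadj q r t (hdec ▸ hpham) htham
        refine ⟨W.copy hu' hvins, ?_, ?_⟩
        · intro z; rw [Walk.support_copy]; exact hWham z
        · rw [Walk.edges_copy]
          rw [hdec, Walk.edges_append, List.mem_append] at hpe
          have hmap : Sym2.map (ins d (u d)) e' ∈ W.edges := by
            rcases hpe with hpe | hpe
            · exact hWq e' hpe
            · rw [Walk.edges_cons, List.mem_cons] at hpe
              rcases hpe with hpe | hpe
              · exact absurd (hfeq.trans hpe.symm) hf1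
              · exact hWr e' hpe
          rw [hE, hbe]
          exact hmap
      · -- e on opposite side from u, v
        obtain ⟨p, hpham⟩ := ham0 m (by omega) (d.removeNth u) (d.removeNth v) hpp
        obtain ⟨f, hfmem, hf1, hf2⟩ := exists_edge_ne hpham.isPath.edges_nodup
          (hlen_lemma p hpham) e' e'
        obtain ⟨x₀, x₁, hadj, q, r, hdec, hfeq⟩ := exists_decomp p hfmem
        obtain ⟨t, htham, hte⟩ := ih e' he' x₀ x₁ (parity_adj hadj)
          (by rw [← hfeq]; exact hf1)
        obtain ⟨W, hWham, hWq, hWr, hWt⟩ := glue_detour (d := d) (b := u d)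
          (b' := a d) (Ne.symm hbe) hadj q r t (hdec ▸ hpham) htham
        refine ⟨W.copy hu' hvins, ?_, ?_⟩
        · intro z; rw [Walk.support_copy]; exact hWham z
        · rw [Walk.edges_copy, hE]
          exact hWt e' hte
    · -- u, v different sides
      have hppeq : parity (d.removeNth u) = parity (d.removeNth v) := hcases.2 hbb
      rcases eq_or_ne (a d) (u d) with hbe | hbe
      · -- e on u's side
        obtain ⟨x, hx1, hx2⟩ := exists_pick1 hm (parity (d.removeNth u)) (d.removeNth u) e'
        obtain ⟨p, hpham, hpe⟩ := ih e' he' (d.removeNth u) x (Ne.symm hx1) hx2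
        obtain ⟨q, hqham⟩ := ham0 m (by omega) x (d.removeNth v)
          (by rw [← hppeq]; exact hx1)
        obtain ⟨W, hWham, hWp, hWq⟩ := glue_cross (d := d) hbb p q hpham hqham
        refine ⟨W.copy hu' hv', ?_, ?_⟩
        · intro z; rw [Walk.support_copy]; exact hWham z
        · rw [Walk.edges_copy, hE, hbe]
          exact hWp e' hpe
      · -- e on v's side
        have hbe2 : a d = v d := z2_eq_of_ne_ne hbe (Ne.symm hbb)
        obtain ⟨x, hx1, hx2⟩ := exists_pick1 hm (parity (d.removeNth u)) (d.removeNth v) e'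
        obtain ⟨p, hpham⟩ := ham0 m (by omega) (d.removeNth u) x (Ne.symm hx1)
        obtain ⟨q, hqham, hqe⟩ := ih e' he' x (d.removeNth v)
          (by rw [← hppeq]; exact hx1)
          (by intro hc; exact hx2 ((Sym2.eq_swap).trans hc))
        obtain ⟨W, hWham, hWp, hWq⟩ := glue_cross (d := d) hbb p q hpham hqham
        refine ⟨W.copy hu' hv', ?_, ?_⟩
        · intro z; rw [Walk.support_copy]; exact hWham z
        · rw [Walk.edges_copy, hE, hbe2]
          exact hWq e' hqe
end CubeAux
namespace CubeAux
open SimpleGraph SimpleGraph.Walk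

lemma good_d {n : ℕ} {a₁ a₂ : V n} {j₁ j₂ : Fin n}
    (hdisj : ∀ z, z ∈ s(a₁, a₁ + δ j₁) → z ∉ s(a₂, a₂ + δ j₂)) :
    ∃ d : Fin n, d ≠ j₁ ∧ d ≠ j₂ ∧ a₁ d ≠ a₂ d := by
  by_contra hcon
  push_neg at hcon
  have h11 : a₁ ∉ s(a₂, a₂ + δ j₂) := hdisj a₁ (Sym2.mem_mk_left _ _)
  have h12 : a₁ + δ j₁ ∉ s(a₂, a₂ + δ j₂) := hdisj _ (Sym2.mem_mk_right _ _)
  have heq : ∀ d, d ≠ j₁ → d ≠ j₂ → a₁ d = a₂ d := hcon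
  rcases eq_or_ne j₁ j₂ with rfl | hj
  · rcases eq_or_ne (a₂ j₁) (a₁ j₁) with hc | hc
    · have : a₂ = a₁ := by
        funext d
        rcases eq_or_ne d j₁ with rfl | hd
        · exact hc
        · exact (heq d hd hd).symm
      exact h11 (this ▸ Sym2.mem_mk_left _ _)
    · have : a₂ + δ j₁ = a₁ := by
        funext d
        rcases eq_or_ne d j₁ with rfl | hd
        · rw [z2_ne] at hc
          show a₂ d + δ d d = a₁ d
          rw [hc]
          simp [δ, Pi.single_apply, add_assoc, CharTwo.add_self_eq_zero]
        · show a₂ d + δ j₁ d = a₁ d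
          rw [(heq d hd hd).symm]
          simp [δ, Pi.single_apply, hd]
      exact h11 (this ▸ Sym2.mem_mk_right _ _)
  · rcases eq_or_ne (a₂ j₁) (a₁ j₁) with hc1 | hc1 <;>
      rcases eq_or_ne (a₂ j₂) (a₁ j₂) with hc2 | hc2
    · have : a₂ = a₁ := by
        funext d
        rcases eq_or_ne d j₁ with rfl | hd1
        · exact hc1
        rcases eq_or_ne d j₂ with rfl | hd2
        · exact hc2
        · exact (heq d hd1 hd2).symm
      exact h11 (this ▸ Sym2.mem_mk_left _ _)
    · -- a₂ + δ j₂ = a₁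
      have : a₂ + δ j₂ = a₁ := by
        funext d
        show a₂ d + δ j₂ d = a₁ d
        rcases eq_or_ne d j₂ with rfl | hd2
        · rw [z2_ne] at hc2
          rw [hc2]
          simp [δ, Pi.single_apply, add_assoc, CharTwo.add_self_eq_zero]
        rcases eq_or_ne d j₁ with rfl | hd1
        · rw [hc1]
          simp [δ, Pi.single_apply, Ne.symm hj, add_assoc, CharTwo.add_self_eq_zero]
        · rw [(heq d hd1 hd2).symm]
          simp [δ, Pi.single_apply, hd2]
      exact h11 (this ▸ Sym2.mem_mk_right _ _)
    · -- a₂ = a₁ + δ j₁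
      have : a₂ = a₁ + δ j₁ := by
        funext d
        show a₂ d = a₁ d + δ j₁ d
        rcases eq_or_ne d j₁ with rfl | hd1
        · rw [z2_ne] at hc1
          rw [hc1]
          simp [δ, Pi.single_apply, add_assoc, CharTwo.add_self_eq_zero]
        rcases eq_or_ne d j₂ with rfl | hd2
        · rw [hc2]
          simp [δ, Pi.single_apply, hj, add_assoc, CharTwo.add_self_eq_zero]
        · rw [(heq d hd1 hd2).symm]
          simp [δ, Pi.single_apply, hd1]
      exact hdisj a₂ (this ▸ Sym2.mem_mk_right _ _) (Sym2.mem_mk_left _ _)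
    · -- a₂ + δ j₂ = a₁ + δ j₁
      have : a₂ + δ j₂ = a₁ + δ j₁ := by
        funext d
        show a₂ d + δ j₂ d = a₁ d + δ j₁ d
        rcases eq_or_ne d j₁ with rfl | hd1
        · rw [z2_ne] at hc1
          rw [hc1]
          simp [δ, Pi.single_apply, Ne.symm hj, add_assoc, CharTwo.add_self_eq_zero]
        rcases eq_or_ne d j₂ with rfl | hd2
        · rw [z2_ne] at hc2
          rw [hc2]
          simp [δ, Pi.single_apply, hj, add_assoc, CharTwo.add_self_eq_zero]
        · rw [(heq d hd1 hd2).symm]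
          simp [δ, Pi.single_apply, hd1, hd2]
      exact hdisj (a₁ + δ j₁) (Sym2.mem_mk_right _ _) (this ▸ Sym2.mem_mk_right _ _)
end CubeAux
open CubeAux SimpleGraph.Walk in
theorem stmt2 (n : ℕ) (hn : 4 ≤ n)
    (e₁ e₂ : Sym2 (Fin n → ZMod 2))
    (he₁ : e₁ ∈ (cube n).edgeSet) (he₂ : e₂ ∈ (cube n).edgeSet)
    (hdisj : ∀ z, z ∈ e₁ → z ∉ e₂)
    (u v : Fin n → ZMod 2) (hp : parity u ≠ parity v)
    (huv₁ : s(u, v) ≠ e₁) (huv₂ : s(u, v) ≠ e₂) :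
    ∃ w : (cube n).Walk u v, w.IsHamiltonian ∧ e₁ ∈ w.edges ∧ e₂ ∈ w.edges := by
  obtain ⟨m, rfl⟩ : ∃ m, n = m + 1 := ⟨n - 1, by omega⟩
  have hm3 : 3 ≤ m := by omega
  have hm2 : 2 ≤ m := by omega
  obtain ⟨a₁, j₁, rfl⟩ := edge_repr he₁
  obtain ⟨a₂, j₂, rfl⟩ := edge_repr he₂
  obtain ⟨d, hdj₁, hdj₂, hb12⟩ := good_d hdisj
  have hside₁ : ∀ z ∈ s(a₁, a₁ + δ j₁), z d = a₁ d := by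
    intro z hz
    rcases Sym2.mem_iff.1 hz with rfl | rfl
    · rfl
    · show a₁ d + δ j₁ d = a₁ d
      simp [δ, Pi.single_eq_of_ne hdj₁]
  have hside₂ : ∀ z ∈ s(a₂, a₂ + δ j₂), z d = a₂ d := by
    intro z hz
    rcases Sym2.mem_iff.1 hz with rfl | rfl
    · rfl
    · show a₂ d + δ j₂ d = a₂ d
      simp [δ, Pi.single_eq_of_ne hdj₂]
  obtain ⟨e₁', he₁', hE₁⟩ := edge_rep he₁ hside₁
  obtain ⟨e₂', he₂', hE₂⟩ := edge_rep he₂ hside₂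
  have hu' : ins d (u d) (d.removeNth u) = u := ins_removeNth d u
  have hv' : ins d (v d) (d.removeNth v) = v := ins_removeNth d v
  have hcases := z2_parity_cases ((parity_split d u) ▸ (parity_split d v) ▸ hp)
  have hlen_lemma : ∀ {x y : V m} (p : (cube m).Walk x y), p.IsHamiltonian →
      3 ≤ p.edges.length := by
    intro x y p hpham
    have h1 : p.edges.length = 2 ^ m - 1 := by
      rw [length_edges, hpham.length_eq, card_V]
    have h4 : 4 ≤ 2 ^ m := by
      calc 4 = 2 ^ 2 := rfl
      _ ≤ 2 ^ m := Nat.pow_le_pow_right (by omega) hm2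
    omega
  rcases eq_or_ne (u d) (v d) with hbb | hbb
  · -- u, v on the same side
    have hpp : parity (d.removeNth u) ≠ parity (d.removeNth v) := hcases.1 hbb
    have hvins : ins d (u d) (d.removeNth v) = v := by rw [hbb]; exact hv'
    rcases eq_or_ne (a₁ d) (u d) with h1u | h1u
    · -- e₁ on u's side, e₂ on the other side
      have h2u : u d ≠ a₂ d := by rw [← h1u]; exact hb12
      have hins_u : ins d (a₁ d) (d.removeNth u) = u := by rw [h1u]; exact hu'
      have hins_v : ins d (a₁ d) (d.removeNth v) = v := by rw [h1u, hbb]; exact hv'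
      have hne : s(d.removeNth u, d.removeNth v) ≠ e₁' := by
        intro hc
        apply huv₁
        rw [hE₁, ← hc, Sym2.map_pair_eq, hins_u, hins_v]
      obtain ⟨p, hpham, hpe⟩ := ham1 m hm2 e₁' he₁' (d.removeNth u) (d.removeNth v) hpp hne
      obtain ⟨f, hfmem, hf1, hf2⟩ := exists_edge_ne hpham.isPath.edges_nodup
        (hlen_lemma p hpham) e₁' e₂'
      obtain ⟨x₀, x₁, hadj, q, r, hdec, hfeq⟩ := exists_decomp p hfmem
      obtain ⟨t, htham, hte⟩ := ham1 m hm2 e₂' he₂' x₀ x₁ (parity_adj hadj)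
        (by rw [← hfeq]; exact hf2)
      obtain ⟨W, hWham, hWq, hWr, hWt⟩ := glue_detour (d := d) (b := u d)
        (b' := a₂ d) h2u hadj q r t (hdec ▸ hpham) htham
      refine ⟨W.copy hu' hvins, ?_, ?_, ?_⟩
      · intro z; rw [Walk.support_copy]; exact hWham z
      · rw [Walk.edges_copy]
        rw [hdec, Walk.edges_append, List.mem_append] at hpe
        have hmap : Sym2.map (ins d (u d)) e₁' ∈ W.edges := by
          rcases hpe with hpe | hpe
          · exact hWq e₁' hpe
          · rw [Walk.edges_cons, List.mem_cons] at hpe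
            rcases hpe with hpe | hpe
            · exact absurd (hfeq.trans hpe.symm) hf1
            · exact hWr e₁' hpe
        rw [hE₁, h1u]
        exact hmap
      · rw [Walk.edges_copy, hE₂]
        exact hWt e₂' hte
    · -- e₂ on u's side, e₁ on the other side
      have h2u : a₂ d = u d := z2_eq_of_ne_ne (Ne.symm hb12) (Ne.symm h1u)
      have hins_u : ins d (a₂ d) (d.removeNth u) = u := by rw [h2u]; exact hu'
      have hins_v : ins d (a₂ d) (d.removeNth v) = v := by rw [h2u, hbb]; exact hv'
      have hne : s(d.removeNth u, d.removeNth v) ≠ e₂' := by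
        intro hc
        apply huv₂
        rw [hE₂, ← hc, Sym2.map_pair_eq, hins_u, hins_v]
      obtain ⟨p, hpham, hpe⟩ := ham1 m hm2 e₂' he₂' (d.removeNth u) (d.removeNth v) hpp hne
      obtain ⟨f, hfmem, hf1, hf2⟩ := exists_edge_ne hpham.isPath.edges_nodup
        (hlen_lemma p hpham) e₁' e₂'
      obtain ⟨x₀, x₁, hadj, q, r, hdec, hfeq⟩ := exists_decomp p hfmem
      obtain ⟨t, htham, hte⟩ := ham1 m hm2 e₁' he₁' x₀ x₁ (parity_adj hadj)
        (by rw [← hfeq]; exact hf1)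
      obtain ⟨W, hWham, hWq, hWr, hWt⟩ := glue_detour (d := d) (b := u d)
        (b' := a₁ d) (Ne.symm h1u) hadj q r t (hdec ▸ hpham) htham
      refine ⟨W.copy hu' hvins, ?_, ?_, ?_⟩
      · intro z; rw [Walk.support_copy]; exact hWham z
      · rw [Walk.edges_copy, hE₁]
        exact hWt e₁' hte
      · rw [Walk.edges_copy]
        rw [hdec, Walk.edges_append, List.mem_append] at hpe
        have hmap : Sym2.map (ins d (u d)) e₂' ∈ W.edges := by
          rcases hpe with hpe | hpe
          · exact hWq e₂' hpe
          · rw [Walk.edges_cons, List.mem_cons] at hpe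
            rcases hpe with hpe | hpe
            · exact absurd (hfeq.trans hpe.symm) hf2
            · exact hWr e₂' hpe
        rw [hE₂, h2u]
        exact hmap
  · -- u, v on different sides
    have hppeq : parity (d.removeNth u) = parity (d.removeNth v) := hcases.2 hbb
    rcases eq_or_ne (a₁ d) (u d) with h1u | h1u
    · -- e₁ on u's side, e₂ on v's side
      have h2v : a₂ d = v d := z2_eq_of_ne_ne (by rw [← h1u]; exact Ne.symm hb12) (Ne.symm hbb)
      obtain ⟨x, hx1, hx2, hx3⟩ := exists_pick2 hm3 (parity (d.removeNth u))
        (d.removeNth u) (d.removeNth v) e₁' e₂'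
      obtain ⟨p, hpham, hpe⟩ := ham1 m hm2 e₁' he₁' (d.removeNth u) x (Ne.symm hx1) hx2
      obtain ⟨q, hqham, hqe⟩ := ham1 m hm2 e₂' he₂' x (d.removeNth v)
        (by rw [← hppeq]; exact hx1) hx3
      obtain ⟨W, hWham, hWp, hWq⟩ := glue_cross (d := d) hbb p q hpham hqham
      refine ⟨W.copy hu' hv', ?_, ?_, ?_⟩
      · intro z; rw [Walk.support_copy]; exact hWham z
      · rw [Walk.edges_copy, hE₁, h1u]
        exact hWp e₁' hpe
      · rw [Walk.edges_copy, hE₂, h2v]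
        exact hWq e₂' hqe
    · -- e₂ on u's side, e₁ on v's side
      have h1v : a₁ d = v d := z2_eq_of_ne_ne h1u (Ne.symm hbb)
      have h2u : a₂ d = u d := by
        have : a₂ d ≠ v d := by rw [← h1v]; exact Ne.symm hb12
        exact z2_eq_of_ne_ne this hbb
      obtain ⟨x, hx1, hx2, hx3⟩ := exists_pick2 hm3 (parity (d.removeNth u))
        (d.removeNth u) (d.removeNth v) e₂' e₁'
      obtain ⟨p, hpham, hpe⟩ := ham1 m hm2 e₂' he₂' (d.removeNth u) x (Ne.symm hx1) hx2
      obtain ⟨q, hqham, hqe⟩ := ham1 m hm2 e₁' he₁' x (d.removeNth v)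
        (by rw [← hppeq]; exact hx1) hx3
      obtain ⟨W, hWham, hWp, hWq⟩ := glue_cross (d := d) hbb p q hpham hqham
      refine ⟨W.copy hu' hv', ?_, ?_, ?_⟩
      · intro z; rw [Walk.support_copy]; exact hWham z
      · rw [Walk.edges_copy, hE₁, h1v]
        exact hWq e₁' hqe
      · rw [Walk.edges_copy, hE₂, h2u]
        exact hWp e₂' hpe
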